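/- Let n be a positive integer, a = (a_1,...,a_n) and b = (b_1,...,b_n) be n-tuples of complex numbers with b_k ≠ 0 for all k, and p = (p_1,...,p_n) nonnegative real weights with ∑_{i=1}^n p_i = 1. Suppose there exist α ∈ ℂ and r > 0 with |α| = r such that a_k / conj(b_k) ∈ D̄(α,r) for every k ∈ {1,...,n}. Then ∑_{k=1}^n p_k |a_k|^2 ≤ 2 Re[ conj(α) · ∑_{k=1}^n p_k a_k b_k ] ≤ 2 |α| · | ∑_{k=1}^n p_k a_k b_k |. -/

import Mathlib

theorem stmt_3 (n : ℕ) (hn : 0 < n) (a b : Fin n → ℂ) (p : Fin n → ℝ)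
    (hb : ∀ k, b k ≠ 0) (hp : ∀ k, 0 ≤ p k) (hp1 : ∑ i, p i = 1)
    (α : ℂ) (r : ℝ) (hr : 0 < r) (hαr : ‖α‖ = r)
    (h : ∀ k, ‖a k / (starRingEnd ℂ) (b k) - α‖ ≤ r) :
    ∑ k, p k * ‖a k‖ ^ 2
      ≤ 2 * ((starRingEnd ℂ) α * ∑ k, (p k : ℂ) * a k * b k).re
    ∧ 2 * ((starRingEnd ℂ) α * ∑ k, (p k : ℂ) * a k * b k).re
      ≤ 2 * ‖α‖ * ‖∑ k, (p k : ℂ) * a k * b k‖ := by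
  constructor
  · -- rewrite RHS as a sum
    have hsum : ((starRingEnd ℂ) α * ∑ k, (p k : ℂ) * a k * b k).re
        = ∑ k, p k * ((starRingEnd ℂ) α * (a k * b k)).re := by
      rw [Finset.mul_sum, Complex.re_sum]
      refine Finset.sum_congr rfl fun k _ => ?_
      have : (starRingEnd ℂ) α * ((p k : ℂ) * a k * b k)
          = (p k : ℂ) * ((starRingEnd ℂ) α * (a k * b k)) := by ring
      rw [this, Complex.re_ofReal_mul]
    rw [hsum, Finset.mul_sum]
    refine Finset.sum_le_sum fun k _ => ?_
    set z := a k / (starRingEnd ℂ) (b k) with hz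
    have hbk : (starRingEnd ℂ) (b k) ≠ 0 := by
      simpa using hb k
    have ha : a k = z * (starRingEnd ℂ) (b k) := by
      rw [hz, div_mul_cancel₀ _ hbk]
    have hz2 : Complex.normSq z ≤ 2 * (z * (starRingEnd ℂ) α).re := by
      have h1 := h k
      have h2 : Complex.normSq (z - α) ≤ r ^ 2 := by
        rw [← Complex.sq_norm]
        nlinarith [norm_nonneg (z - α)]
      have h3 : Complex.normSq α = r ^ 2 := by
        rw [← Complex.sq_norm, hαr]
      have h4 := Complex.normSq_sub z α
      linarith
    have habs : ‖a k‖ ^ 2 = Complex.normSq z * Complex.normSq (b k) := by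
      rw [← Complex.sq_norm, ha, norm_mul, mul_pow, Complex.sq_norm, Complex.sq_norm,
        Complex.normSq_conj]
    have hre : ((starRingEnd ℂ) α * (a k * b k)).re
        = (z * (starRingEnd ℂ) α).re * Complex.normSq (b k) := by
      have : (starRingEnd ℂ) α * (a k * b k)
          = (z * (starRingEnd ℂ) α) * ((Complex.normSq (b k) : ℝ) : ℂ) := by
        rw [ha, mul_assoc z, mul_comm ((starRingEnd ℂ) (b k)), Complex.mul_conj',
          Complex.normSq_eq_norm_sq]
        push_cast
        ring
      rw [this, Complex.mul_re]
      simp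
    rw [habs, hre]
    have hnsq : 0 ≤ Complex.normSq (b k) := Complex.normSq_nonneg _
    have hpk := hp k
    nlinarith [mul_le_mul_of_nonneg_left hz2 (mul_nonneg hpk hnsq)]
  · have h1 : ((starRingEnd ℂ) α * ∑ k, (p k : ℂ) * a k * b k).re
        ≤ ‖(starRingEnd ℂ) α * ∑ k, (p k : ℂ) * a k * b k‖ :=
      Complex.re_le_norm _
    rw [norm_mul, Complex.norm_conj] at h1
    linarith
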